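/- For every f ∈ A one has δ(u_1 · δf) = 0, i.e. the variational derivative of the product of the variable u_1 with the variational derivative of f vanishes. -/

import Mathlib

open MvPolynomial

open Finset

/-- The derivation `∂ₓ = Σ_{k≥0} u_{k+1} ∂/∂u_k` on `A = ℝ[u₀, u₁, …]`
(the sum is finite on each polynomial). -/
noncomputable def dx (f : MvPolynomial ℕ ℝ) : MvPolynomial ℕ ℝ :=
  ∑ᶠ k : ℕ, X (k + 1) * pderiv k f

lemma pderiv_comm' (i j : ℕ) (f : MvPolynomial ℕ ℝ) :
    pderiv i (pderiv j f) = pderiv j (pderiv i f) := by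
  induction f using MvPolynomial.induction_on with
  | C a => simp
  | add p q hp hq => simp [hp, hq]
  | mul_X p n hp =>
      simp only [pderiv_mul, map_add, hp, pderiv_X, apply_ite (pderiv i),
        apply_ite (pderiv j), Pi.single_apply, pderiv_one, map_zero, ite_self]
      ring

def Bnd (N : ℕ) (f : MvPolynomial ℕ ℝ) : Prop := ∀ k, N ≤ k → pderiv k f = 0

lemma exists_bnd (f : MvPolynomial ℕ ℝ) : ∃ N, Bnd N f := by
  obtain ⟨n, hn⟩ := f.vars.exists_nat_subset_range
  exact ⟨n, fun k hk => pderiv_eq_zero_of_notMem_vars fun hm =>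
    absurd (Finset.mem_range.1 (hn hm)) (not_lt.2 hk)⟩

lemma bnd_mono {N M : ℕ} {f : MvPolynomial ℕ ℝ} (h : Bnd N f) (hNM : N ≤ M) : Bnd M f :=
  fun k hk => h k (hNM.trans hk)

lemma dx_eq_sum {N : ℕ} {f : MvPolynomial ℕ ℝ} (h : Bnd N f) :
    dx f = ∑ k ∈ range N, X (k + 1) * pderiv k f := by
  refine finsum_eq_sum_of_support_subset _ fun k hk => ?_
  simp only [Function.mem_support, ne_eq] at hk
  by_contra hkN
  exact hk (by rw [h k (not_lt.1 fun h' => hkN (Finset.mem_coe.2 (Finset.mem_range.2 h'))), mul_zero])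

lemma dx_zero : dx 0 = 0 := by
  simp [dx, finsum_zero]

lemma dx_iter_zero (k : ℕ) : dx^[k] 0 = 0 :=
  Function.iterate_fixed dx_zero k

lemma bnd_add {N : ℕ} {a b : MvPolynomial ℕ ℝ} (ha : Bnd N a) (hb : Bnd N b) :
    Bnd N (a + b) := fun k hk => by rw [map_add, ha k hk, hb k hk, add_zero]

lemma bnd_smul {N : ℕ} {a : MvPolynomial ℕ ℝ} (r : ℝ) (ha : Bnd N a) :
    Bnd N (r • a) := fun k hk => by rw [Derivation.map_smul, ha k hk, smul_zero]

lemma bnd_mul {N : ℕ} {a b : MvPolynomial ℕ ℝ} (ha : Bnd N a) (hb : Bnd N b) :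
    Bnd N (a * b) := fun k hk => by
  rw [pderiv_mul, ha k hk, hb k hk, zero_mul, mul_zero, add_zero]

lemma bnd_pderiv {N : ℕ} {a : MvPolynomial ℕ ℝ} (ha : Bnd N a) (j : ℕ) :
    Bnd N (pderiv j a) := fun k hk => by
  rw [pderiv_comm' k j, ha k hk, map_zero]

lemma dx_add (a b : MvPolynomial ℕ ℝ) : dx (a + b) = dx a + dx b := by
  obtain ⟨Na, ha⟩ := exists_bnd a
  obtain ⟨Nb, hb⟩ := exists_bnd b
  have ha' := bnd_mono ha (le_max_left Na Nb)
  have hb' := bnd_mono hb (le_max_right Na Nb)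
  rw [dx_eq_sum ha', dx_eq_sum hb', dx_eq_sum (bnd_add ha' hb'), ← Finset.sum_add_distrib]
  exact Finset.sum_congr rfl fun k _ => by rw [map_add, mul_add]

lemma dx_smul (r : ℝ) (a : MvPolynomial ℕ ℝ) : dx (r • a) = r • dx a := by
  obtain ⟨N, ha⟩ := exists_bnd a
  rw [dx_eq_sum ha, dx_eq_sum (bnd_smul r ha), Finset.smul_sum]
  exact Finset.sum_congr rfl fun k _ => by rw [Derivation.map_smul, mul_smul_comm]

lemma dx_sub (a b : MvPolynomial ℕ ℝ) : dx (a - b) = dx a - dx b := by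
  have h : a - b = a + (-1 : ℝ) • b := by ring_nf; rw [neg_one_smul]; ring
  rw [h, dx_add, dx_smul, neg_one_smul, ← sub_eq_add_neg]

lemma dx_mul (a b : MvPolynomial ℕ ℝ) : dx (a * b) = dx a * b + a * dx b := by
  obtain ⟨Na, ha⟩ := exists_bnd a
  obtain ⟨Nb, hb⟩ := exists_bnd b
  have ha' := bnd_mono ha (le_max_left Na Nb)
  have hb' := bnd_mono hb (le_max_right Na Nb)
  rw [dx_eq_sum ha', dx_eq_sum hb', dx_eq_sum (bnd_mul ha' hb'),
    Finset.sum_mul, Finset.mul_sum, ← Finset.sum_add_distrib]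
  exact Finset.sum_congr rfl fun k _ => by rw [pderiv_mul]; ring

lemma dx_X (n : ℕ) : dx (X n) = X (n + 1) := by
  have : dx (X n) = X (n+1) * pderiv n (X n) := by
    refine finsum_eq_single _ n fun k hk => ?_
    rw [pderiv_X_of_ne (Ne.symm hk), mul_zero]
  rw [this, pderiv_X_self, mul_one]

lemma dx_iter_X1 (k : ℕ) : dx^[k] (X 1) = X (k + 1) := by
  induction k with
  | zero => simp
  | succ n ih => rw [Function.iterate_succ_apply', ih, dx_X]

lemma dx_iter_add (k : ℕ) (a b : MvPolynomial ℕ ℝ) :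
    dx^[k] (a + b) = dx^[k] a + dx^[k] b := by
  induction k generalizing a b with
  | zero => simp
  | succ n ih => simp only [Function.iterate_succ_apply]; rw [dx_add, ih]

lemma dx_iter_smul (k : ℕ) (r : ℝ) (a : MvPolynomial ℕ ℝ) :
    dx^[k] (r • a) = r • dx^[k] a := by
  induction k generalizing a with
  | zero => simp
  | succ n ih => simp only [Function.iterate_succ_apply]; rw [dx_smul, ih]

lemma dx_sum {α : Type*} (s : Finset α) (g : α → MvPolynomial ℕ ℝ) :
    dx (∑ i ∈ s, g i) = ∑ i ∈ s, dx (g i) := by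
  classical
  induction s using Finset.induction_on with
  | empty => simp [dx_zero]
  | insert a s h ih => rw [Finset.sum_insert h, dx_add, ih, Finset.sum_insert h]

/-- The variational derivative `δ = Σ_{k≥0} (−1)^k ∂ₓ^k ∘ (∂/∂u_k)`
(the sum is finite on each polynomial). -/
noncomputable def delta (f : MvPolynomial ℕ ℝ) : MvPolynomial ℕ ℝ :=
  ∑ᶠ k : ℕ, ((-1 : ℝ) ^ k) • (dx^[k] (pderiv k f))

lemma delta_eq_sum {N : ℕ} {f : MvPolynomial ℕ ℝ} (h : Bnd N f) :
    delta f = ∑ k ∈ range N, ((-1 : ℝ) ^ k) • (dx^[k] (pderiv k f)) := by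
  refine finsum_eq_sum_of_support_subset _ fun k hk => ?_
  simp only [Function.mem_support, ne_eq] at hk
  by_contra hkN
  refine hk ?_
  rw [h k (not_lt.1 fun h' => hkN (Finset.mem_coe.2 (Finset.mem_range.2 h'))),
    dx_iter_zero, smul_zero]

lemma pderiv_dx {N : ℕ} {f : MvPolynomial ℕ ℝ} (h : Bnd N f) (k : ℕ) :
    pderiv (k + 1) (dx f) = dx (pderiv (k + 1) f) + pderiv k f := by
  rw [dx_eq_sum h, map_sum, dx_eq_sum (bnd_pderiv h (k + 1))]
  have key : ∀ j ∈ range N, pderiv (k+1) (X (j+1) * pderiv j f)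
      = X (j+1) * pderiv j (pderiv (k+1) f) + (if j = k then pderiv k f else 0) := by
    intro j _
    rw [pderiv_mul, pderiv_comm' (k+1) j]
    rcases eq_or_ne j k with rfl | hjk
    · rw [pderiv_X_self, if_pos rfl, one_mul]; ring
    · rw [pderiv_X_of_ne (by omega), if_neg hjk, zero_mul, zero_add, add_zero]
  rw [Finset.sum_congr rfl key, Finset.sum_add_distrib]
  congr 1
  rcases lt_or_ge k N with hkN | hkN
  · rw [Finset.sum_ite_eq' (range N) k fun _ => pderiv k f, if_pos (Finset.mem_range.2 hkN)]
  · rw [Finset.sum_ite_eq' (range N) k fun _ => pderiv k f,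
      if_neg (by simp [Finset.mem_range]; omega), h k hkN]

lemma pderiv_zero_dx {N : ℕ} {f : MvPolynomial ℕ ℝ} (h : Bnd N f) :
    pderiv 0 (dx f) = dx (pderiv 0 f) := by
  rw [dx_eq_sum h, map_sum, dx_eq_sum (bnd_pderiv h 0)]
  refine Finset.sum_congr rfl fun j _ => ?_
  rw [pderiv_mul, pderiv_X_of_ne (by omega), zero_mul, zero_add, pderiv_comm' 0 j]

lemma bnd_dx {N : ℕ} {f : MvPolynomial ℕ ℝ} (h : Bnd N f) : Bnd (N + 1) (dx f) := by
  intro k hk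
  obtain ⟨m, rfl⟩ : ∃ m, k = m + 1 := ⟨k - 1, by omega⟩
  rw [pderiv_dx h, h (m+1) (by omega), h m (by omega), dx_zero, add_zero]

lemma delta_dx (g : MvPolynomial ℕ ℝ) : delta (dx g) = 0 := by
  obtain ⟨N, h⟩ := exists_bnd g
  rw [delta_eq_sum (bnd_dx h)]
  have step : ∀ k ∈ range (N + 1), ((-1 : ℝ) ^ k) • (dx^[k] (pderiv k (dx g)))
      = (((-1 : ℝ) ^ k) • dx^[k+1] (pderiv k g))
        - (if k = 0 then 0 else ((-1 : ℝ) ^ (k-1)) • dx^[k] (pderiv (k-1) g)) := by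
    intro k _
    rcases k with _ | m
    · rw [if_pos rfl, sub_zero, pow_zero, one_smul, one_smul,
        Function.iterate_zero_apply, Function.iterate_one, pderiv_zero_dx h]
    · rw [if_neg (by omega), pderiv_dx h, dx_iter_add, smul_add,
        ← Function.iterate_succ_apply]
      simp only [Nat.add_sub_cancel]
      module
  rw [Finset.sum_congr rfl step, Finset.sum_sub_distrib]
  have h2 : ∑ k ∈ range (N+1), (if k = 0 then 0 else ((-1:ℝ)^(k-1)) • dx^[k] (pderiv (k-1) g))
      = ∑ j ∈ range N, ((-1:ℝ)^j) • dx^[j+1] (pderiv j g) := by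
    rw [Finset.sum_range_succ' (fun k => if k = 0 then 0 else ((-1:ℝ)^(k-1)) • dx^[k] (pderiv (k-1) g)) N]
    simp
  rw [h2, Finset.sum_range_succ, h N le_rfl, dx_iter_zero, smul_zero, add_zero, sub_self]

noncomputable def P (k : ℕ) (c : MvPolynomial ℕ ℝ) : MvPolynomial ℕ ℝ :=
  ∑ j ∈ range k, ((-1 : ℝ) ^ j) • (X (k - j) * dx^[j] c)

lemma ibp (k : ℕ) (c : MvPolynomial ℕ ℝ) :
    X (k + 1) * c = ((-1 : ℝ) ^ k) • (X 1 * dx^[k] c) + dx (P k c) := by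
  induction k generalizing c with
  | zero => simp [P, dx_zero]
  | succ k ih =>
    have hP : P (k + 1) c = X (k + 1) * c - P k (dx c) := by
      rw [P, Finset.sum_range_succ'
        (fun j => ((-1 : ℝ) ^ j) • (X (k + 1 - j) * dx^[j] c)) k]
      have e : ∀ j, ((-1 : ℝ) ^ (j+1)) • (X (k + 1 - (j+1)) * dx^[j+1] c)
          = -(((-1 : ℝ) ^ j) • (X (k - j) * dx^[j] (dx c))) := by
        intro j
        rw [Nat.succ_sub_succ, Function.iterate_succ_apply, pow_succ]
        module
      simp only [e, Finset.sum_neg_distrib, Nat.sub_zero, pow_zero, one_smul,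
        Function.iterate_zero_apply, P]
      ring
    have step : X (k + 1 + 1) * c = dx (X (k + 1) * c) - X (k + 1) * dx c := by
      rw [dx_mul, dx_X]; ring
    rw [step, ih (dx c), hP, dx_sub, ← Function.iterate_succ_apply]
    have hpow : ((-1 : ℝ) ^ (k+1)) = -((-1 : ℝ) ^ k) := by ring
    rw [hpow]
    module

/-- `δ(u₁ · δf) = 0` for every `f ∈ A`. -/
theorem delta_u1_delta_eq_zero :
    ∀ f : MvPolynomial ℕ ℝ, delta (X 1 * delta f) = 0 := by
  intro f
  obtain ⟨N, h⟩ := exists_bnd f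
  have key : X 1 * delta f = dx (f - ∑ k ∈ range N, P k (pderiv k f)) := by
    rw [dx_sub, dx_sum, dx_eq_sum h, delta_eq_sum h, Finset.mul_sum,
      ← Finset.sum_sub_distrib]
    refine Finset.sum_congr rfl fun k _ => ?_
    rw [mul_smul_comm]
    have := ibp k (pderiv k f)
    linear_combination this.symm
  rw [key]
  exact delta_dx _
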